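/- For even q = 2k, the wheel graph W_q does not admit a strong involution: any duality isomorphism τ must send the center c to the outer face and hence induce a map on the q-cycle, and for even q no such map satisfies both u ∈ τ(v) ⟺ v ∈ τ(u) and v ∉ τ(v). -/

import Mathlib

/-- The wheel graph `W_q`: a `q`-cycle `a₀, …, a_{q-1}` together with a
central vertex (the `Sum.inr` vertex) joined to all cycle vertices. -/
def wheel (q : ℕ) [NeZero q] : SimpleGraph (Fin q ⊕ Unit) :=
  SimpleGraph.fromRel (fun x y =>
    match x, y with
    | Sum.inl i, Sum.inl j => j = i + 1
    | Sum.inl _, Sum.inr _ => True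
    | _, _ => False)

/-- Face incidence for the standard plane embedding of the wheel: the face
`Sum.inl i` is the triangle `(aᵢ, aᵢ₊₁, c)` and `Sum.inr` is the outer face
bounded by the `q`-cycle. -/
def wheelFaceMem (q : ℕ) [NeZero q] : (Fin q ⊕ Unit) → (Fin q ⊕ Unit) → Prop :=
  fun v F =>
    match F with
    | Sum.inl i => v = Sum.inl i ∨ v = Sum.inl (i + 1) ∨ v = Sum.inr ()
    | Sum.inr _ => ∃ j : Fin q, v = Sum.inl j

/-- The planar dual of the wheel: two faces are adjacent when they share an
edge of the wheel. -/
def wheelDual (q : ℕ) [NeZero q] : SimpleGraph (Fin q ⊕ Unit) :=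
  SimpleGraph.fromRel (fun F F' =>
    ∃ u v : Fin q ⊕ Unit, u ≠ v ∧ (wheel q).Adj u v ∧
      wheelFaceMem q u F ∧ wheelFaceMem q v F ∧
      wheelFaceMem q u F' ∧ wheelFaceMem q v F')

open Fin.CommRing in
/-- For even `q = 2k ≥ 4`, the wheel graph `W_q` admits no strong involution:
there is no duality isomorphism (a bijection from vertices to faces carrying
adjacency of the wheel to adjacency of the dual) satisfying both
`u ∈ τ(v) ↔ v ∈ τ(u)` and `v ∉ τ(v)` for all vertices. -/

lemma subOneConst {q : ℕ} [NeZero q] {α : Sort*} (F : Fin q → α)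
    (h : ∀ i, F (i - 1) = F i) : ∀ i, F i = F 0 := by
  have key : ∀ (n : ℕ) (i : Fin q), F (i - (n : Fin q)) = F i := by
    intro n
    induction n with
    | zero => intro i; simp
    | succ m ih =>
      intro i
      have e : i - ((m + 1 : ℕ) : Fin q) = (i - (m : Fin q)) - 1 := by
        push_cast; ring
      rw [e, h, ih]
  intro i
  have := key i.val i
  rw [Fin.cast_val_eq_self, sub_self] at this
  exact this.symm

lemma subOneConstP {q : ℕ} [NeZero q] (F : Fin q → Prop)
    (h : ∀ i, F (i - 1) ↔ F i) : ∀ i, F i ↔ F 0 := by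
  have := subOneConst F (fun i => propext (h i))
  intro i; rw [this i]

lemma L1 {q k : ℕ} [NeZero q] (hqk : q = 2 * k) (hk : 2 ≤ k) (c : Fin q) :
    ∃ i : Fin q, i + i = c ∨ i + i = c + 1 := by
  have hq4 : 4 ≤ q := by omega
  have hv : c.val < q := c.isLt
  have hone : (1 : Fin q).val = 1 := by rw [Fin.val_one', Nat.mod_eq_of_lt (by omega)]
  rcases Nat.even_or_odd c.val with ⟨m, hm⟩ | ⟨m, hm⟩
  · refine ⟨⟨m, by omega⟩, Or.inl ?_⟩
    apply Fin.ext
    rw [Fin.val_add]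
    simp only []
    show (m + m) % q = c.val
    rw [Nat.mod_eq_of_lt (by omega)]; omega
  · -- c.val = 2*m+1
    by_cases hqe : c.val + 1 = q
    · refine ⟨⟨k, by omega⟩, Or.inr ?_⟩
      apply Fin.ext
      rw [Fin.val_add, Fin.val_add, hone]
      show (k + k) % q = (c.val + 1) % q
      rw [hqe, Nat.mod_self]
      rw [show k + k = q from by omega, Nat.mod_self]
    · refine ⟨⟨m + 1, by omega⟩, Or.inr ?_⟩
      apply Fin.ext
      rw [Fin.val_add, Fin.val_add, hone]
      show (m + 1 + (m + 1)) % q = (c.val + 1) % q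
      rw [Nat.mod_eq_of_lt (by omega), Nat.mod_eq_of_lt (by omega)]
      omega

lemma L2 {q k : ℕ} [NeZero q] (hqk : q = 2 * k) (hk : 2 ≤ k) (c : Fin q)
    (h : c + c + 1 = 0) : False := by
  have hq4 : 4 ≤ q := by omega
  have hone : (1 : Fin q).val = 1 := by rw [Fin.val_one', Nat.mod_eq_of_lt (by omega)]
  have hv : c.val < q := c.isLt
  have h0 : (c + c + 1).val = 0 := by rw [h]; rfl
  rw [Fin.val_add, Fin.val_add, hone] at h0
  have e1 : (c.val + c.val) % q = c.val + c.val ∨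
      (c.val + c.val) % q = c.val + c.val - q := by
    rcases lt_or_ge (c.val + c.val) q with h'|h'
    · exact Or.inl (Nat.mod_eq_of_lt h')
    · right; rw [Nat.mod_eq_sub_mod h', Nat.mod_eq_of_lt (by omega)]
  have e2 := Nat.mod_lt ((c.val + c.val) % q + 1) (show 0 < q by omega)
  rcases e1 with e|e <;> rw [e] at h0 <;>
    rcases Nat.lt_or_ge (c.val + c.val - (if True then 0 else 0)) q with _|_ <;>
    · rcases Nat.lt_or_ge ((c.val + c.val) % q) q with _|_
      all_goals
        first
        | (rw [Nat.mod_eq_of_lt (by omega)] at h0; omega)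
        | (rw [Nat.mod_eq_sub_mod (by omega), Nat.mod_eq_of_lt (by omega)] at h0; omega)

open Fin.CommRing in
lemma core {q k : ℕ} [NeZero q] (hqk : q = 2 * k) (hk : 2 ≤ k)
    (ψ : Fin q → Fin q) (hinj : Function.Injective ψ)
    (H : ∀ i j : Fin q, (i = ψ j ∨ i = ψ j + 1) ↔ (j = ψ i ∨ j = ψ i + 1))
    (I : ∀ i : Fin q, ¬ (i = ψ i ∨ i = ψ i + 1)) : False := by
  have hq4 : 4 ≤ q := by omega
  have hone : (1 : Fin q) ≠ 0 := by
    intro h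
    have : (1 : Fin q).val = (0 : Fin q).val := by rw [h]
    rw [Fin.val_one', Nat.mod_eq_of_lt (by omega), Fin.val_zero] at this
    omega
  have hsucc : ∀ a : Fin q, a ≠ a + 1 := by
    intro a h; exact hone (left_eq_add.mp h)
  have hpred : ∀ a : Fin q, a - 1 ≠ a := fun a h => hone (sub_eq_self.mp h)
  have s1 : ∀ i, i = ψ (ψ i) ∨ i = ψ (ψ i) + 1 := fun i => (H i (ψ i)).mpr (Or.inl rfl)
  have s2 : ∀ i, i = ψ (ψ i + 1) ∨ i = ψ (ψ i + 1) + 1 :=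
    fun i => (H i (ψ i + 1)).mpr (Or.inr rfl)
  have caseAB : ∀ i, (ψ (ψ i) = i ∧ ψ (ψ i + 1) + 1 = i) ∨
      (ψ (ψ i) + 1 = i ∧ ψ (ψ i + 1) = i) := by
    intro i
    rcases s1 i with h1 | h1 <;> rcases s2 i with h2 | h2
    · exact absurd (hinj (h1.symm.trans h2)) (hsucc (ψ i))
    · exact Or.inl ⟨h1.symm, h2.symm⟩
    · exact Or.inr ⟨h1.symm, h2.symm⟩
    · exact absurd (hinj (add_right_cancel (h1.symm.trans h2))) (hsucc (ψ i))
  set P : Fin q → Prop := fun i => ψ (ψ i) = i with hPdef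
  have hPA : ∀ i, P i → ψ (ψ i + 1) + 1 = i := by
    intro i hP
    rcases caseAB i with ⟨_, h⟩ | ⟨h1, _⟩
    · exact h
    · exfalso
      have hP' : ψ (ψ i) = i := hP
      rw [hP'] at h1
      exact hsucc i h1.symm
  have hPB : ∀ i, ¬ P i → ψ (ψ i) + 1 = i ∧ ψ (ψ i + 1) = i :=
    fun i h => (caseAB i).resolve_left (fun hl => h hl.1)
  have stepA : ∀ i, P i → ψ (i - 1) = ψ i + 1 ∧ P (i - 1) := by
    intro i hP
    have hB1 : ψ (ψ i + 1) = i - 1 := by rw [eq_sub_iff_add_eq]; exact hPA i hP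
    rcases caseAB (ψ i + 1) with ⟨hL, _⟩ | ⟨hR, _⟩
    · rw [hB1] at hL
      refine ⟨hL, ?_⟩
      show ψ (ψ (i - 1)) = i - 1
      rw [hL, hB1]
    · rw [hB1] at hR
      exact absurd (hinj (add_right_cancel hR)) (hpred i)
  have hPpsi : ∀ i, ¬ P i → ¬ P (ψ i) := by
    intro i hP h
    exact hP (hinj h)
  have stepB1 : ∀ i, ¬ P i → ψ (i - 1) = ψ i - 1 := by
    intro i hP
    obtain ⟨h1, h2⟩ := hPB i hP
    have hψψ : ψ (ψ i) = i - 1 := by rw [eq_sub_iff_add_eq]; exact h1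
    obtain ⟨g1, g2⟩ := hPB (ψ i) (hPpsi i hP)
    rw [hψψ] at g1
    rw [eq_sub_iff_add_eq]
    exact g1
  have stepB2 : ∀ i, ¬ P i → ¬ P (i - 1) := by
    intro i hP hcontra
    have hψψ : ψ (ψ i) = i - 1 := by
      rw [eq_sub_iff_add_eq]; exact (hPB i hP).1
    have e1 := stepB1 i hP
    have e2 := stepB1 (ψ i) (hPpsi i hP)
    have : ψ (ψ (i - 1)) = i - 1 := hcontra
    rw [e1, e2, hψψ] at this
    exact hpred (i - 1) this
  have Pconst : ∀ i, P i ↔ P 0 := by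
    refine subOneConstP P (fun i => ⟨fun h => ?_, fun h => (stepA i h).2⟩)
    by_contra hn
    exact stepB2 i hn h
  by_cases hP0 : P 0
  · have hall : ∀ i, P i := fun i => (Pconst i).mpr hP0
    have hconst := subOneConst (fun i => ψ i + i) (by
      intro i
      show ψ (i - 1) + (i - 1) = ψ i + i
      rw [(stepA i (hall i)).1]; ring)
    have hc : ∀ i : Fin q, ψ i + i = ψ 0 := by
      intro i
      have := hconst i
      simpa using this
    obtain ⟨i, hi | hi⟩ := L1 hqk hk (ψ 0)
    · apply I i
      left
      have h1 : ψ i + i = i + i := by rw [hc i, ← hi]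
      exact (add_right_cancel h1).symm
    · apply I i
      right
      have h1 : i + i = (ψ i + 1) + i := by
        rw [hi, ← hc i]; ring
      exact add_right_cancel h1
  · have hall : ∀ i, ¬ P i := fun i h => hP0 ((Pconst i).mp h)
    have hconst := subOneConst (fun i => ψ i - i) (by
      intro i
      show ψ (i - 1) - (i - 1) = ψ i - i
      rw [stepB1 i (hall i)]; ring)
    have hc : ∀ i : Fin q, ψ i - i = ψ 0 := by
      intro i
      have := hconst i
      simpa using this
    have hc2 : ψ (ψ 0) = ψ 0 + ψ 0 := by
      have := hc (ψ 0)
      rw [sub_eq_iff_eq_add] at this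
      exact this
    have h1 := (hPB 0 (hall 0)).1
    rw [hc2] at h1
    exact L2 hqk hk (ψ 0) h1

theorem even_wheel_no_strong_involution (q k : ℕ) [NeZero q]
    (hqk : q = 2 * k) (hk : 2 ≤ k) :
    ¬ ∃ τ : (Fin q ⊕ Unit) ≃ (Fin q ⊕ Unit),
      (∀ u v : Fin q ⊕ Unit, (wheel q).Adj u v ↔ (wheelDual q).Adj (τ u) (τ v)) ∧
      (∀ u v : Fin q ⊕ Unit, wheelFaceMem q u (τ v) ↔ wheelFaceMem q v (τ u)) ∧
      (∀ v : Fin q ⊕ Unit, ¬ wheelFaceMem q v (τ v)) := by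
  rintro ⟨τ, -, hmem, hirr⟩
  have hτc : τ (Sum.inr ()) = Sum.inr () := by
    have h := hirr (Sum.inr ())
    rcases hh : τ (Sum.inr ()) with i | u
    · exfalso
      apply h
      rw [hh]
      exact Or.inr (Or.inr rfl)
    · rfl
  have hlift : ∀ i : Fin q, ∃ j, τ (Sum.inl i) = Sum.inl j := by
    intro i
    rcases hh : τ (Sum.inl i) with j | u
    · exact ⟨j, rfl⟩
    · exfalso
      cases u
      have := τ.injective (hh.trans hτc.symm)
      simp at this
  choose ψ hψ using hlift
  have hinj : Function.Injective ψ := by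
    intro a b hab
    have h2 : τ (Sum.inl a) = τ (Sum.inl b) := by rw [hψ a, hψ b, hab]
    simpa using τ.injective h2
  have H : ∀ i j : Fin q, (i = ψ j ∨ i = ψ j + 1) ↔ (j = ψ i ∨ j = ψ i + 1) := by
    intro i j
    have h2 := hmem (Sum.inl i) (Sum.inl j)
    rw [hψ i, hψ j] at h2
    simpa [wheelFaceMem] using h2
  have I : ∀ i : Fin q, ¬ (i = ψ i ∨ i = ψ i + 1) := by
    intro i h
    apply hirr (Sum.inl i)
    rw [hψ i]
    simpa [wheelFaceMem] using h
  exact core hqk hk ψ hinj H I
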